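/- arXiv:1104.0915 — 2 statements merged into one kernel-verified Lean document; each statement's English description precedes it below -/
import Mathlib

section
/- Let (a_k) be a strictly increasing sequence of positive integers. Then the generalized discrete Hilbert transform G_a, defined by (G_a ξ)(n) = Σ_{k ≠ n} ξ_k/(a_k - a_n), is a bounded operator on ℓ²(ℕ), with norm at most that of the standard discrete Hilbert transform. -/
open Function
open scoped ENNReal

section Aux

variable {a : ℕ → ℕ}

private lemma extend_norm_sq (ha : Function.Injective a) (ξ : ℕ → ℂ) (m : ℕ) :
    ‖Function.extend a ξ 0 m‖ ^ (2:ℝ) =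
      Function.extend a (fun k => ‖ξ k‖ ^ (2:ℝ)) 0 m := by
  by_cases h : ∃ k, a k = m
  · obtain ⟨k, rfl⟩ := h
    rw [ha.extend_apply, ha.extend_apply]
  · rw [Function.extend_apply' _ _ _ h, Function.extend_apply' _ _ _ h]
    simp [Real.zero_rpow]

private lemma summable_sq (ξ : lp (fun _ : ℕ => ℂ) 2) :
    Summable fun k => ‖(ξ : ∀ _ : ℕ, ℂ) k‖ ^ (2:ℝ) := by
  have := (lp.memℓp ξ).summable (p := 2) (by norm_num)
  simpa using this

private lemma tsum_extend_sq (ha : Function.Injective a) (ξ : lp (fun _ : ℕ => ℂ) 2) :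
    (∑' m, ‖Function.extend a (ξ : ∀ _ : ℕ, ℂ) 0 m‖ ^ (2:ℝ))
      = ∑' k, ‖(ξ : ∀ _ : ℕ, ℂ) k‖ ^ (2:ℝ) := by
  have hs := summable_sq ξ
  have h1 : (∑' m, Function.extend a (fun k => ‖(ξ : ∀ _ : ℕ, ℂ) k‖ ^ (2:ℝ)) 0 m)
      = ∑' k, ‖(ξ : ∀ _ : ℕ, ℂ) k‖ ^ (2:ℝ) :=
    ((hasSum_extend_zero ha).mpr hs.hasSum).tsum_eq
  rw [← h1]
  exact tsum_congr fun m => extend_norm_sq ha ξ m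

private lemma memℓp_extend (ha : Function.Injective a) (ξ : lp (fun _ : ℕ => ℂ) 2) :
    Memℓp (Function.extend a (ξ : ∀ _ : ℕ, ℂ) 0) 2 := by
  apply memℓp_gen
  have h2 : (2 : ℝ≥0∞).toReal = 2 := by norm_num
  rw [h2]
  have : Summable (Function.extend a (fun k => ‖(ξ : ∀ _ : ℕ, ℂ) k‖ ^ (2:ℝ)) 0) :=
    ((hasSum_extend_zero ha).mpr (summable_sq ξ).hasSum).summable
  exact this.congr fun m => (extend_norm_sq ha ξ m).symm

private lemma memℓp_comp (ha : Function.Injective a) (ξ : lp (fun _ : ℕ => ℂ) 2) :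
    Memℓp (fun n => (ξ : ∀ _ : ℕ, ℂ) (a n)) 2 := by
  apply memℓp_gen
  have h2 : (2 : ℝ≥0∞).toReal = 2 := by norm_num
  rw [h2]
  exact (summable_sq ξ).comp_injective ha

end Aux

/-- for a strictly increasing sequence of positive integers `a`, the
generalized discrete Hilbert transform `(G_a ξ)(n) = Σ_{k≠n} ξ_k/(a_k - a_n)` is bounded
on ℓ²(ℕ), with norm at most that of the standard discrete Hilbert transform `G`,
`(G ξ)(n) = Σ_{k≠n} ξ_k/(k - n)`. -/
theorem stmt1 (a : ℕ → ℕ) (ha : StrictMono a) (hpos : ∀ k, 0 < a k)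
    (G : lp (fun _ : ℕ => ℂ) 2 →L[ℂ] lp (fun _ : ℕ => ℂ) 2)
    (hG : ∀ (ξ : lp (fun _ : ℕ => ℂ) 2) (n : ℕ),
      (G ξ : ∀ _ : ℕ, ℂ) n = ∑' k : {k : ℕ // k ≠ n}, ξ k / (((k : ℕ) : ℂ) - (n : ℂ))) :
    ∃ Ga : lp (fun _ : ℕ => ℂ) 2 →L[ℂ] lp (fun _ : ℕ => ℂ) 2,
      ‖Ga‖ ≤ ‖G‖ ∧
      ∀ (ξ : lp (fun _ : ℕ => ℂ) 2) (n : ℕ),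
        (Ga ξ : ∀ _ : ℕ, ℂ) n = ∑' k : {k : ℕ // k ≠ n}, ξ k / ((a k : ℂ) - (a n : ℂ)) := by
  have hainj : Function.Injective a := ha.injective
  have h2 : (2 : ℝ≥0∞).toReal = 2 := by norm_num
  -- extension by zero
  let E : lp (fun _ : ℕ => ℂ) 2 →ₗ[ℂ] lp (fun _ : ℕ => ℂ) 2 :=
    { toFun := fun ξ => ⟨Function.extend a ξ 0, memℓp_extend hainj ξ⟩
      map_add' := by
        intro ξ η
        ext m
        show Function.extend a (⇑(ξ + η)) 0 m = Function.extend a (⇑ξ) 0 m +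
          Function.extend a (⇑η) 0 m
        by_cases h : ∃ k, a k = m
        · obtain ⟨k, rfl⟩ := h
          rw [hainj.extend_apply, hainj.extend_apply, hainj.extend_apply]; rfl
        · rw [Function.extend_apply' _ _ _ h, Function.extend_apply' _ _ _ h,
            Function.extend_apply' _ _ _ h]; simp
      map_smul' := by
        intro c ξ
        ext m
        show Function.extend a (⇑(c • ξ)) 0 m = c • Function.extend a (⇑ξ) 0 m
        by_cases h : ∃ k, a k = m
        · obtain ⟨k, rfl⟩ := h
          simp [hainj.extend_apply]
        · simp [Function.extend_apply' _ _ _ h] }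
  have hEnorm : ∀ ξ, ‖E ξ‖ ≤ 1 * ‖ξ‖ := by
    intro ξ
    rw [one_mul, lp.norm_eq_tsum_rpow (p := 2) (by norm_num) (E ξ),
      lp.norm_eq_tsum_rpow (p := 2) (by norm_num) ξ, h2]
    have : (∑' m, ‖(E ξ : ∀ _ : ℕ, ℂ) m‖ ^ (2:ℝ)) = ∑' k, ‖(ξ : ∀ _ : ℕ, ℂ) k‖ ^ (2:ℝ) :=
      tsum_extend_sq hainj ξ
    rw [this]
  let EL : lp (fun _ : ℕ => ℂ) 2 →L[ℂ] lp (fun _ : ℕ => ℂ) 2 :=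
    E.mkContinuous 1 hEnorm
  -- pullback along a
  let U : lp (fun _ : ℕ => ℂ) 2 →ₗ[ℂ] lp (fun _ : ℕ => ℂ) 2 :=
    { toFun := fun ξ => ⟨fun n => ξ (a n), memℓp_comp hainj ξ⟩
      map_add' := by intro ξ η; ext n; simp; rfl
      map_smul' := by intro c ξ; ext n; simp }
  have hUnorm : ∀ ξ, ‖U ξ‖ ≤ 1 * ‖ξ‖ := by
    intro ξ
    rw [one_mul, lp.norm_eq_tsum_rpow (p := 2) (by norm_num) (U ξ),
      lp.norm_eq_tsum_rpow (p := 2) (by norm_num) ξ, h2]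
    have hle : (∑' n, ‖(U ξ : ∀ _ : ℕ, ℂ) n‖ ^ (2:ℝ))
        ≤ ∑' k, ‖(ξ : ∀ _ : ℕ, ℂ) k‖ ^ (2:ℝ) :=
      tsum_comp_le_tsum_of_inj (summable_sq ξ) (fun k => by positivity) hainj
    have h1 : (0:ℝ) ≤ ∑' n, ‖(U ξ : ∀ _ : ℕ, ℂ) n‖ ^ (2:ℝ) :=
      tsum_nonneg fun n => by positivity
    have h3 : (0:ℝ) < 1 / 2 := by norm_num
    exact Real.rpow_le_rpow h1 hle (le_of_lt h3)
  let UL : lp (fun _ : ℕ => ℂ) 2 →L[ℂ] lp (fun _ : ℕ => ℂ) 2 :=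
    U.mkContinuous 1 hUnorm
  refine ⟨UL.comp (G.comp EL), ?_, ?_⟩
  · have hUL : ‖UL‖ ≤ 1 := LinearMap.mkContinuous_norm_le _ zero_le_one _
    have hEL : ‖EL‖ ≤ 1 := LinearMap.mkContinuous_norm_le _ zero_le_one _
    have hc1 : ‖UL.comp (G.comp EL)‖ ≤ ‖UL‖ * ‖G.comp EL‖ :=
      ContinuousLinearMap.opNorm_comp_le _ _
    have hc2 : ‖G.comp EL‖ ≤ ‖G‖ * ‖EL‖ := ContinuousLinearMap.opNorm_comp_le _ _
    nlinarith [norm_nonneg UL, norm_nonneg (G.comp EL), norm_nonneg G, norm_nonneg EL]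
  · intro ξ n
    have h1 : ((UL.comp (G.comp EL)) ξ : ∀ _ : ℕ, ℂ) n = (G (EL ξ) : ∀ _ : ℕ, ℂ) (a n) := rfl
    rw [h1, hG (EL ξ) (a n)]
    have hEapp : ∀ m, (EL ξ : ∀ _ : ℕ, ℂ) m = Function.extend a (ξ : ∀ _ : ℕ, ℂ) 0 m :=
      fun m => rfl
    -- reindex the sum
    set f : {m : ℕ // m ≠ a n} → ℂ :=
      fun m => (EL ξ : ∀ _ : ℕ, ℂ) m / (((m : ℕ) : ℂ) - ((a n : ℕ) : ℂ)) with hf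
    set g : {k : ℕ // k ≠ n} → ℂ :=
      fun k => (ξ : ∀ _ : ℕ, ℂ) k / ((a (k : ℕ) : ℂ) - (a n : ℂ)) with hg
    show (∑' m, f m) = ∑' k, g k
    refine tsum_eq_tsum_of_ne_zero_bij
      (fun k => ⟨a (k : {k : ℕ // k ≠ n}), fun h => (k : {k : ℕ // k ≠ n}).2 (hainj h)⟩)
      ?_ ?_ ?_
    · rintro ⟨⟨k₁, hk₁⟩, h₁⟩ ⟨⟨k₂, hk₂⟩, h₂⟩ h
      simp only [Subtype.mk.injEq] at h
      exact Subtype.ext (Subtype.ext (hainj h))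
    · rintro ⟨m, hm⟩ hmem
      simp only [Function.mem_support, hf] at hmem
      have hex : ∃ k, a k = m := by
        by_contra hne
        apply hmem
        rw [hEapp, Function.extend_apply' _ _ _ hne]
        simp
      obtain ⟨k, rfl⟩ := hex
      have hkn : k ≠ n := fun h => hm (by rw [h])
      have hgk : g ⟨k, hkn⟩ ≠ 0 := by
        intro h0
        apply hmem
        rw [hEapp, hainj.extend_apply]
        simpa [hg] using h0
      exact ⟨⟨⟨k, hkn⟩, hgk⟩, rfl⟩
    · rintro ⟨⟨k, hk⟩, hksupp⟩
      simp only [hf, hg]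
      rw [hEapp, hainj.extend_apply]
end

section
/- Let α ∈ (0,1), c > 0, and let (t_k) be a real sequence with t_{k+1} - t_k ≥ c·k^{α-1} for all k ≥ 1. Set v = 2^{1/(1-α)}. If v^{M} ≤ m < v^{M+1} and v^{N} ≤ n-1 < v^{N+1} with M ≤ N - 2, then t_n - t_m ≥ c(1 - 1/v)·v^{αN}. -/
open scoped Real

private lemma stmt5_step (α : ℝ) (hα : 0 < α) (hα1 : α < 1) {x : ℝ} (hx : 1 ≤ x) :
    (x + 1) ^ α - x ^ α ≤ α * x ^ (α - 1) := by
  have hx0 : (0 : ℝ) < x := lt_of_lt_of_le one_pos hx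
  have h1 : x + 1 = x * (1 + 1 / x) := by field_simp
  have h2 : (x + 1) ^ α ≤ x ^ α * (1 + α * (1 / x)) := by
    rw [h1, Real.mul_rpow hx0.le (by positivity)]
    have := rpow_one_add_le_one_add_mul_self (s := 1 / x) (le_trans (by norm_num : (-1:ℝ) ≤ 0) (by positivity)) hα.le hα1.le
    exact mul_le_mul_of_nonneg_left this (by positivity)
  have h3 : x ^ (α - 1) = x ^ α * x⁻¹ := by
    rw [Real.rpow_sub hx0, Real.rpow_one, div_eq_mul_inv]
  have hxa : (0 : ℝ) < x ^ α := Real.rpow_pos_of_pos hx0 α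
  rw [h3]
  have : x ^ α * (1 + α * (1 / x)) = x ^ α + α * (x ^ α * x⁻¹) := by
    field_simp
  linarith [h2, this ▸ h2]

private lemma stmt5_tele (α c : ℝ) (hα : 0 < α) (hα1 : α < 1) (hc : 0 < c)
    (t : ℕ → ℝ) (hgap : ∀ k : ℕ, 1 ≤ k → t (k + 1) - t k ≥ c * (k : ℝ) ^ (α - 1))
    (m : ℕ) (hm : 1 ≤ m) : ∀ n, m ≤ n →
    c / α * ((n : ℝ) ^ α - (m : ℝ) ^ α) ≤ t n - t m := by
  intro n hn
  induction n, hn using Nat.le_induction with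
  | base => simp
  | succ n hmn ih =>
    have hn1 : 1 ≤ n := le_trans hm hmn
    have hn1' : (1 : ℝ) ≤ (n : ℝ) := by exact_mod_cast hn1
    have hgapn := hgap n hn1
    have hstep := stmt5_step α hα hα1 hn1'
    have hca : 0 < c / α := div_pos hc hα
    have : c / α * (((n : ℝ) + 1) ^ α - (n : ℝ) ^ α) ≤ c * (n : ℝ) ^ (α - 1) := by
      rw [div_mul_eq_mul_div, div_le_iff₀ hα]
      calc c * (((n : ℝ) + 1) ^ α - (n : ℝ) ^ α) ≤ c * (α * (n : ℝ) ^ (α - 1)) :=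
            mul_le_mul_of_nonneg_left hstep hc.le
        _ = c * (n : ℝ) ^ (α - 1) * α := by ring
    have hcast : ((n + 1 : ℕ) : ℝ) = (n : ℝ) + 1 := by push_cast; ring
    rw [hcast]
    have := hgap n hn1
    nlinarith [ih]

/-- block separation estimate. If `t_{k+1} - t_k ≥ c k^{α-1}` (α ∈ (0,1)),
`v = 2^{1/(1-α)}`, `m ∈ [v^M, v^{M+1})`, `n-1 ∈ [v^N, v^{N+1})` and `M ≤ N-2`,
then `t_n - t_m ≥ c(1 - 1/v) v^{αN}`. -/
theorem stmt5 (α c : ℝ) (hα : 0 < α) (hα1 : α < 1) (hc : 0 < c)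
    (t : ℕ → ℝ) (hgap : ∀ k : ℕ, 1 ≤ k → t (k + 1) - t k ≥ c * (k : ℝ) ^ (α - 1))
    (v : ℝ) (hv : v = 2 ^ ((1 : ℝ) / (1 - α)))
    (m n M N : ℕ)
    (hm : v ^ M ≤ (m : ℝ) ∧ (m : ℝ) < v ^ (M + 1))
    (hn : v ^ N ≤ (n : ℝ) - 1 ∧ (n : ℝ) - 1 < v ^ (N + 1))
    (hMN : M + 2 ≤ N) :
    t n - t m ≥ c * (1 - 1 / v) * v ^ (α * (N : ℝ)) := by
  have hv1 : 1 < v := by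
    rw [hv]
    apply Real.one_lt_rpow_iff_of_pos (by norm_num) |>.mpr
    left
    constructor
    · norm_num
    · have : 0 < 1 - α := by linarith
      positivity
  have hv0 : (0 : ℝ) < v := lt_trans one_pos hv1
  -- m ≥ 1
  have hm1r : (1 : ℝ) ≤ (m : ℝ) := le_trans (one_le_pow₀ hv1.le) hm.1
  have hm1 : 1 ≤ m := by exact_mod_cast hm1r
  -- m ≤ n
  have hmvN : (m : ℝ) < v ^ N := by
    calc (m : ℝ) < v ^ (M + 1) := hm.2
      _ ≤ v ^ N := pow_le_pow_right₀ hv1.le (by omega)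
  have hmn_r : (m : ℝ) < (n : ℝ) := by
    have := hn.1
    nlinarith [pow_pos hv0 N]
  have hmn : m ≤ n := by exact_mod_cast hmn_r.le
  -- telescoping bound
  have htele := stmt5_tele α c hα hα1 hc t hgap m hm1 n hmn
  -- n^α ≥ v^(α N)
  have hvN : (v : ℝ) ^ N = v ^ ((N : ℝ)) := (Real.rpow_natCast v N).symm
  have hvM1 : (v : ℝ) ^ (M + 1) = v ^ (((M : ℝ) + 1)) := by
    rw [← Real.rpow_natCast v (M + 1)]; push_cast; ring_nf
  have hnN : v ^ (α * (N : ℝ)) ≤ (n : ℝ) ^ α := by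
    have h1 : v ^ ((N : ℝ)) ≤ (n : ℝ) := by
      rw [← hvN]; linarith [hn.1]
    have h2 : (v ^ ((N : ℝ))) ^ α ≤ (n : ℝ) ^ α :=
      Real.rpow_le_rpow (by positivity) h1 hα.le
    rwa [← Real.rpow_mul hv0.le, mul_comm (N : ℝ) α] at h2
  -- m^α ≤ v^(α N - α)
  have hmM : (m : ℝ) ^ α ≤ v ^ (α * (N : ℝ) - α) := by
    have h1 : (m : ℝ) ^ α ≤ (v ^ (((M : ℝ) + 1))) ^ α :=
      Real.rpow_le_rpow (by positivity) (by rw [← hvM1]; exact hm.2.le) hα.le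
    rw [← Real.rpow_mul hv0.le] at h1
    refine h1.trans (Real.rpow_le_rpow_of_exponent_le hv1.le ?_)
    have hMN' : (M : ℝ) + 1 ≤ (N : ℝ) - 1 := by
      have : (M : ℝ) + 2 ≤ (N : ℝ) := by exact_mod_cast hMN
      linarith
    calc ((M : ℝ) + 1) * α ≤ ((N : ℝ) - 1) * α := by nlinarith
      _ = α * (N : ℝ) - α := by ring
  -- Bernoulli: v^(-α) ≤ 1 + α * (1/v - 1)
  have hbern : v ^ (-α) ≤ 1 + α * (1 / v - 1) := by
    have hs : (-1 : ℝ) ≤ 1 / v - 1 := by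
      have : 0 < 1 / v := by positivity
      linarith
    have := rpow_one_add_le_one_add_mul_self (s := 1 / v - 1) hs hα.le hα1.le
    have heq : (1 : ℝ) + (1 / v - 1) = 1 / v := by ring
    rw [heq] at this
    calc v ^ (-α) = (1 / v) ^ α := by
          rw [one_div, ← Real.rpow_neg_one v, ← Real.rpow_mul hv0.le]; ring_nf
      _ ≤ 1 + α * (1 / v - 1) := this
  -- combine
  have hsplit : v ^ (α * (N : ℝ) - α) = v ^ (α * (N : ℝ)) * v ^ (-α) := by
    rw [← Real.rpow_add hv0]; ring_nf
  have hvaN : (0 : ℝ) < v ^ (α * (N : ℝ)) := Real.rpow_pos_of_pos hv0 _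
  have hkey : c * (1 - 1 / v) * v ^ (α * (N : ℝ)) ≤
      c / α * ((n : ℝ) ^ α - (m : ℝ) ^ α) := by
    have h1 : (n : ℝ) ^ α - (m : ℝ) ^ α ≥ v ^ (α * (N : ℝ)) * (1 - v ^ (-α)) := by
      have := hmM
      rw [hsplit] at this
      nlinarith
    have h2 : (1 : ℝ) - v ^ (-α) ≥ α * (1 - 1 / v) := by nlinarith
    have hca : 0 < c / α := div_pos hc hα
    calc c * (1 - 1 / v) * v ^ (α * (N : ℝ))
        = c / α * (v ^ (α * (N : ℝ)) * (α * (1 - 1 / v))) := by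
          field_simp
      _ ≤ c / α * (v ^ (α * (N : ℝ)) * (1 - v ^ (-α))) := by
          apply mul_le_mul_of_nonneg_left _ hca.le
          exact mul_le_mul_of_nonneg_left h2 hvaN.le
      _ ≤ c / α * ((n : ℝ) ^ α - (m : ℝ) ^ α) :=
          mul_le_mul_of_nonneg_left h1 hca.le
  linarith [htele, hkey]
end
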